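/- Let H be a real inner product space, T ≥ 2, and for each t ∈ {2, …, T} let ℓ̄_t, ℓ̂_t : H → ℝ be convex differentiable functions whose gradients are bounded in norm by G everywhere. Fix step sizes η > 0 and γ > 0. Starting from w₁ = 0, define for t = 2, …, T the updates w'_t = w_{t−1} − η·∇ℓ̄_t(w_{t−1}) and w_t = w'_t − γ·∇ℓ̂_t(w'_t). Then for every u ∈ H: Σ_{t=2}^T ℓ̄_t(w_{t−1}) − Σ_{t=2}^T ℓ̄_t(u) ≤ ‖u‖²/(2η) + (T−1)·G²(η + γ)²/(2η) − (γ/η)·Σ_{t=2}^T ⟨∇ℓ̂_t(w'_t), w_{t−1} − u⟩. -/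

import Mathlib

open scoped RealInnerProductSpace
open Finset

lemma convex_grad_ineq {H : Type*} [NormedAddCommGroup H] [InnerProductSpace ℝ H]
    [CompleteSpace H] {f : H → ℝ} (hc : ConvexOn ℝ Set.univ f) (hd : Differentiable ℝ f)
    (x y : H) : f x + ⟪gradient f x, y - x⟫ ≤ f y := by
  set v := y - x with hv
  set h : ℝ → ℝ := fun s => f (x + s • v) with hh
  have hderiv : HasDerivAt h ⟪gradient f x, v⟫ 0 := by
    have h1 : HasFDerivAt f ((InnerProductSpace.toDual ℝ H) (gradient f x)) x :=
      (hd x).hasGradientAt.hasFDerivAt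
    have h1' : HasFDerivAt f ((InnerProductSpace.toDual ℝ H) (gradient f x)) (x + (0:ℝ) • v) := by
      simpa using h1
    have h2 : HasDerivAt (fun s : ℝ => x + s • v) v 0 := by
      simpa using ((hasDerivAt_id (0:ℝ)).smul_const v).const_add x
    have := h1'.comp_hasDerivAt (f := fun s : ℝ => x + s • v) (x := (0:ℝ)) (by simpa [add_comm] using h2)
    simpa [hh, add_comm, Function.comp_def] using this
  have hslope : Filter.Tendsto (slope h 0) (nhdsWithin 0 (Set.Ioi (0:ℝ)))
      (nhds ⟪gradient f x, v⟫) :=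
    (hasDerivAt_iff_tendsto_slope.mp hderiv).mono_left
      (nhdsWithin_mono _ (fun s hs => ne_of_gt hs))
  have hbound : ∀ s ∈ Set.Ioo (0:ℝ) 1, slope h 0 s ≤ f y - f x := by
    intro s hs
    have hcvx := hc.2 (Set.mem_univ x) (Set.mem_univ y) (by linarith [hs.2] : (0:ℝ) ≤ 1 - s)
      (le_of_lt hs.1) (by ring)
    have hxy : (1 - s) • x + s • y = x + s • v := by
      simp only [hv, smul_sub, sub_smul, one_smul]; abel
    rw [hxy] at hcvx
    have hnum : h s - h 0 ≤ (f y - f x) * s := by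
      simp only [hh, zero_smul, add_zero, smul_eq_mul] at hcvx ⊢
      nlinarith
    rw [slope_def_field, sub_zero, div_le_iff₀ hs.1]
    linarith
  have hev : ∀ᶠ s in nhdsWithin 0 (Set.Ioi (0:ℝ)), slope h 0 s ≤ f y - f x :=
    Filter.eventually_of_mem (Ioo_mem_nhdsGT_of_mem ⟨le_refl _, zero_lt_one⟩) hbound
  have := le_of_tendsto hslope hev
  linarith

/-- **Summed online gradient descent bound for the two-step AOGD update**
(Lemma 2 in the paper's appendix). Starting from `w 1 = 0`, with updates
`w' t = w (t−1) − η∇ℓ̄ₜ(w (t−1))` and `w t = w' t − γ∇ℓ̂ₜ(w' t)` for `t = 2, …, T`,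
the cumulative regret of the average-based losses `ℓ̄ₜ` against any `u` is bounded. -/
theorem aogd_summed_regret_bound
    {H : Type*} [NormedAddCommGroup H] [InnerProductSpace ℝ H] [CompleteSpace H]
    (T : ℕ) (hT : 2 ≤ T)
    (ℓbar ℓhat : ℕ → H → ℝ) (G : ℝ)
    (hbar_cvx : ∀ t ∈ Finset.Icc 2 T, ConvexOn ℝ Set.univ (ℓbar t))
    (hhat_cvx : ∀ t ∈ Finset.Icc 2 T, ConvexOn ℝ Set.univ (ℓhat t))
    (hbar_diff : ∀ t ∈ Finset.Icc 2 T, Differentiable ℝ (ℓbar t))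
    (hhat_diff : ∀ t ∈ Finset.Icc 2 T, Differentiable ℝ (ℓhat t))
    (hbar_grad : ∀ t ∈ Finset.Icc 2 T, ∀ w : H, ‖gradient (ℓbar t) w‖ ≤ G)
    (hhat_grad : ∀ t ∈ Finset.Icc 2 T, ∀ w : H, ‖gradient (ℓhat t) w‖ ≤ G)
    (η γ : ℝ) (hη : 0 < η) (hγ : 0 < γ)
    (w w' : ℕ → H)
    (hw1 : w 1 = 0)
    (hw' : ∀ t ∈ Finset.Icc 2 T, w' t = w (t - 1) - η • gradient (ℓbar t) (w (t - 1)))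
    (hw : ∀ t ∈ Finset.Icc 2 T, w t = w' t - γ • gradient (ℓhat t) (w' t))
    (u : H) :
    ∑ t ∈ Finset.Icc 2 T, ℓbar t (w (t - 1)) - ∑ t ∈ Finset.Icc 2 T, ℓbar t u ≤
      ‖u‖ ^ 2 / (2 * η) + ((T : ℝ) - 1) * G ^ 2 * (η + γ) ^ 2 / (2 * η)
        - (γ / η) * ∑ t ∈ Finset.Icc 2 T, ⟪gradient (ℓhat t) (w' t), w (t - 1) - u⟫ := by
  have hG : 0 ≤ G := le_trans (norm_nonneg _) (hbar_grad 2 (by simp [hT]) 0)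
  -- per-step inequality (multiplied by 2η)
  have per : ∀ t ∈ Finset.Icc 2 T,
      2 * η * (ℓbar t (w (t - 1)) - ℓbar t u) ≤
        (‖w (t - 1) - u‖ ^ 2 - ‖w t - u‖ ^ 2) + G ^ 2 * (η + γ) ^ 2
          - 2 * γ * ⟪gradient (ℓhat t) (w' t), w (t - 1) - u⟫ := by
    intro t ht
    set g := gradient (ℓbar t) (w (t - 1)) with hg
    set q := gradient (ℓhat t) (w' t) with hqdef
    have h1 : w t = w' t - γ • q := hw t ht
    have h2 : w' t = w (t - 1) - η • g := hw' t ht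
    have hwt : w t - u = (w (t - 1) - u) - (η • g + γ • q) := by
      rw [h1, h2]; abel
    have hnormsq : ‖w t - u‖ ^ 2 =
        ‖w (t - 1) - u‖ ^ 2 - 2 * ⟪w (t - 1) - u, η • g + γ • q⟫ + ‖η • g + γ • q‖ ^ 2 := by
      rw [hwt]; exact norm_sub_sq_real _ _
    have hinner : ⟪w (t - 1) - u, η • g + γ • q⟫ =
        η * ⟪g, w (t - 1) - u⟫ + γ * ⟪q, w (t - 1) - u⟫ := by
      rw [inner_add_right, real_inner_smul_right, real_inner_smul_right,
        real_inner_comm (w (t - 1) - u) g, real_inner_comm (w (t - 1) - u) q]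
    have hnorm : ‖η • g + γ • q‖ ^ 2 ≤ G ^ 2 * (η + γ) ^ 2 := by
      have h3 : ‖η • g + γ • q‖ ≤ G * (η + γ) := by
        calc ‖η • g + γ • q‖ ≤ ‖η • g‖ + ‖γ • q‖ := norm_add_le _ _
          _ = η * ‖g‖ + γ * ‖q‖ := by
              rw [norm_smul, norm_smul, Real.norm_eq_abs, Real.norm_eq_abs,
                abs_of_pos hη, abs_of_pos hγ]
          _ ≤ η * G + γ * G :=
              add_le_add (mul_le_mul_of_nonneg_left (hbar_grad t ht _) hη.le)
                (mul_le_mul_of_nonneg_left (hhat_grad t ht _) hγ.le)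
          _ = G * (η + γ) := by ring
      nlinarith [norm_nonneg (η • g + γ • q)]
    have hcv := convex_grad_ineq (hbar_cvx t ht) (hbar_diff t ht) (w (t - 1)) u
    rw [← hg] at hcv
    have hflip : ⟪g, u - w (t - 1)⟫ = -⟪g, w (t - 1) - u⟫ := by
      rw [← neg_sub, inner_neg_right]
    have hcv' : ℓbar t (w (t - 1)) - ℓbar t u ≤ ⟪g, w (t - 1) - u⟫ := by
      rw [hflip] at hcv; linarith
    have hmul := mul_le_mul_of_nonneg_left hcv' (by linarith : (0:ℝ) ≤ 2 * η)
    rw [hinner] at hnormsq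
    linarith
  have sum1 := Finset.sum_le_sum per
  -- telescoping
  have tele : ∀ n : ℕ, 1 ≤ n →
      ∑ t ∈ Finset.Icc 2 n, (‖w (t - 1) - u‖ ^ 2 - ‖w t - u‖ ^ 2)
        = ‖w 1 - u‖ ^ 2 - ‖w n - u‖ ^ 2 := by
    intro n hn
    induction n, hn using Nat.le_induction with
    | base => rw [Finset.Icc_eq_empty (by omega)]; simp
    | succ n hn ih =>
        rw [Finset.sum_Icc_succ_top (by omega : 2 ≤ n + 1), ih,
          show n + 1 - 1 = n from rfl]
        ring
  have htele := tele T (by omega)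
  have hw1u : ‖w 1 - u‖ ^ 2 = ‖u‖ ^ 2 := by rw [hw1, zero_sub, norm_neg]
  rw [hw1u] at htele
  have hcard : ((Finset.Icc 2 T).card : ℝ) = (T : ℝ) - 1 := by
    rw [Nat.card_Icc, Nat.cast_sub (by omega : 2 ≤ T + 1)]
    push_cast; ring
  -- rewrite both sides of sum1
  rw [← Finset.mul_sum, Finset.sum_sub_distrib] at sum1
  have hrhs : ∑ t ∈ Finset.Icc 2 T,
      ((‖w (t - 1) - u‖ ^ 2 - ‖w t - u‖ ^ 2) + G ^ 2 * (η + γ) ^ 2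
        - 2 * γ * ⟪gradient (ℓhat t) (w' t), w (t - 1) - u⟫)
      = (‖u‖ ^ 2 - ‖w T - u‖ ^ 2) + ((T : ℝ) - 1) * (G ^ 2 * (η + γ) ^ 2)
        - 2 * γ * ∑ t ∈ Finset.Icc 2 T, ⟪gradient (ℓhat t) (w' t), w (t - 1) - u⟫ := by
    rw [Finset.sum_sub_distrib, Finset.sum_add_distrib, htele, Finset.sum_const,
      ← Finset.mul_sum, nsmul_eq_mul, hcard]
  rw [hrhs] at sum1
  set S := ∑ t ∈ Finset.Icc 2 T, ℓbar t (w (t - 1)) with hS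
  set Su := ∑ t ∈ Finset.Icc 2 T, ℓbar t u with hSu
  set I := ∑ t ∈ Finset.Icc 2 T, ⟪gradient (ℓhat t) (w' t), w (t - 1) - u⟫ with hI
  have h2η : (0:ℝ) < 2 * η := by linarith
  have hmain : S - Su ≤ (‖u‖ ^ 2 + ((T : ℝ) - 1) * (G ^ 2 * (η + γ) ^ 2) - 2 * γ * I) / (2 * η) := by
    rw [le_div_iff₀ h2η]
    nlinarith [sq_nonneg ‖w T - u‖]
  have hrw : ‖u‖ ^ 2 / (2 * η) + ((T : ℝ) - 1) * G ^ 2 * (η + γ) ^ 2 / (2 * η) - (γ / η) * I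
      = (‖u‖ ^ 2 + ((T : ℝ) - 1) * (G ^ 2 * (η + γ) ^ 2) - 2 * γ * I) / (2 * η) := by
    field_simp
  rw [hrw]
  exact hmain
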